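/- Let n ≥ 2 and let f : 2^[n] → ℝ be a simple supermodular function that is neither modular nor irreducible. Then there exist a partition [n] = S₁ ∪ S₂ into two disjoint nonempty sets and supermodular functions g₁ : 2^{S₁} → ℝ and g₂ : 2^{S₂} → ℝ such that f(I) = g₁(I∩S₁) + g₂(I∩S₂) for all I ⊆ [n]. -/
import Mathlib


/-- A function on subsets of `[n]` is supermodular if
`f (I ∩ J) + f (I ∪ J) ≥ f I + f J` for all `I, J`. -/
def Supermodular {n : ℕ} (f : Finset (Fin n) → ℝ) : Prop :=
  ∀ I J : Finset (Fin n), f I + f J ≤ f (I ∩ J) + f (I ∪ J)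

/-- A function on subsets of `[n]` is modular if
`f (I ∩ J) + f (I ∪ J) = f I + f J` for all `I, J`. -/
def Modular {n : ℕ} (f : Finset (Fin n) → ℝ) : Prop :=
  ∀ I J : Finset (Fin n), f (I ∩ J) + f (I ∪ J) = f I + f J

/-- A supermodular function is irreducible if it is not modular and whenever it is a
sum of two supermodular functions, each summand differs from `c • f`, some `c ≥ 0`,
by a modular function. -/
def IrreducibleSupermodular {n : ℕ} (f : Finset (Fin n) → ℝ) : Prop :=
  Supermodular f ∧ ¬ Modular f ∧
  ∀ g₁ g₂ : Finset (Fin n) → ℝ, Supermodular g₁ → Supermodular g₂ → f = g₁ + g₂ →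
    (∃ c : ℝ, 0 ≤ c ∧ Modular (g₁ - c • f)) ∧ (∃ c : ℝ, 0 ≤ c ∧ Modular (g₂ - c • f))

/-- The discrete derivative `∂ᵢ f`, a function on subsets of `[n] ∖ {i}`. -/
def dDeriv {n : ℕ} (i : Fin n) (f : Finset (Fin n) → ℝ) (I : Finset (Fin n)) : ℝ :=
  f (insert i I) - f I

/-- `g` is nondecreasing as a function on subsets of the ground set `S`. -/
def NondecreasingOn {n : ℕ} (S : Finset (Fin n)) (g : Finset (Fin n) → ℝ) : Prop :=
  ∀ I J : Finset (Fin n), I ⊆ S → J ⊆ I → g J ≤ g I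

/-- `g` is constant as a function on subsets of the ground set `S`. -/
def ConstantOn {n : ℕ} (S : Finset (Fin n)) (g : Finset (Fin n) → ℝ) : Prop :=
  ∃ c : ℝ, ∀ I : Finset (Fin n), I ⊆ S → g I = c

/-- A nondecreasing function `g` on subsets of the ground set `S` is irreducible if it
is not constant and whenever `g = h₁ + h₂` on `2^S` with `h₁, h₂` nondecreasing on `S`,
each `hᵢ` differs on `2^S` from a nonnegative multiple of `g` by a constant. -/
def NondecIrreducibleOn {n : ℕ} (S : Finset (Fin n)) (g : Finset (Fin n) → ℝ) : Prop :=
  ¬ ConstantOn S g ∧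
  ∀ h₁ h₂ : Finset (Fin n) → ℝ, NondecreasingOn S h₁ → NondecreasingOn S h₂ →
    (∀ I : Finset (Fin n), I ⊆ S → g I = h₁ I + h₂ I) →
    (∃ c : ℝ, 0 ≤ c ∧ ∃ d : ℝ, ∀ I : Finset (Fin n), I ⊆ S → h₁ I = c * g I + d) ∧
    (∃ c : ℝ, 0 ≤ c ∧ ∃ d : ℝ, ∀ I : Finset (Fin n), I ⊆ S → h₂ I = c * g I + d)

/-- A supermodular function `f` is simple if for each `i ∈ [n]` the nondecreasing
function `∂ᵢ f` on subsets of `[n] ∖ {i}` is irreducible or constant. -/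
def SimpleSupermodular {n : ℕ} (f : Finset (Fin n) → ℝ) : Prop :=
  Supermodular f ∧
  ∀ i : Fin n, NondecIrreducibleOn (Finset.univ.erase i) (dDeriv i f) ∨
    ConstantOn (Finset.univ.erase i) (dDeriv i f)

namespace SSDaux

variable {n : ℕ}

/-- Second difference of `f` in directions `i`, `j` at base set `K`. -/
def D (f : Finset (Fin n) → ℝ) (i j : Fin n) (K : Finset (Fin n)) : ℝ :=
  f (insert i (insert j K)) - f (insert i K) - f (insert j K) + f K

lemma D_symm (f : Finset (Fin n) → ℝ) (i j : Fin n) (K : Finset (Fin n)) :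
    D f i j K = D f j i K := by
  unfold D; rw [Finset.insert_comm]; ring

lemma D_eq_deriv (f : Finset (Fin n) → ℝ) (i j : Fin n) (K : Finset (Fin n)) :
    D f i j K = dDeriv i f (insert j K) - dDeriv i f K := by
  unfold D dDeriv; ring

/-- Dependency relation between coordinates. -/
def rel (f : Finset (Fin n) → ℝ) (i j : Fin n) : Prop :=
  i ≠ j ∧ ∃ K : Finset (Fin n), i ∉ K ∧ j ∉ K ∧ D f i j K ≠ 0

lemma rel_symm {f : Finset (Fin n) → ℝ} {i j : Fin n} (h : rel f i j) : rel f j i := by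
  obtain ⟨hne, K, hi, hj, hD⟩ := h
  exact ⟨hne.symm, K, hj, hi, by rwa [D_symm]⟩

lemma deriv_nondec {f : Finset (Fin n) → ℝ} (hf : Supermodular f) (i : Fin n) :
    NondecreasingOn (Finset.univ.erase i) (dDeriv i f) := by
  intro I J hI hJI
  have hiI : i ∉ I := fun h => (Finset.mem_erase.mp (hI h)).1 rfl
  have h1 : (insert i J) ∩ I = J := by
    ext x
    simp only [Finset.mem_inter, Finset.mem_insert]
    constructor
    · rintro ⟨(rfl | hx), hxI⟩
      · exact absurd hxI hiI
      · exact hx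
    · intro hx; exact ⟨Or.inr hx, hJI hx⟩
  have h2 : (insert i J) ∪ I = insert i I := by
    rw [Finset.insert_union, Finset.union_eq_right.mpr hJI]
  have := hf (insert i J) I
  rw [h1, h2] at this
  unfold dDeriv
  linarith

lemma modular_of_deriv_const {h : Finset (Fin n) → ℝ}
    (hd : ∀ i : Fin n, ∃ d : ℝ, ∀ I : Finset (Fin n), i ∉ I → h (insert i I) = h I + d) :
    Modular h := by
  classical
  choose d hd using hd
  have key : ∀ I : Finset (Fin n), h I = h ∅ + ∑ i ∈ I, d i := by
    intro I
    induction I using Finset.induction_on with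
    | empty => simp
    | @insert a s ha ih =>
      rw [hd a s ha, Finset.sum_insert ha, ih]; ring
  intro I J
  rw [key I, key J, key (I ∩ J), key (I ∪ J)]
  have := Finset.sum_union_inter (s₁ := I) (s₂ := J) (f := d)
  linarith

lemma component_lemma (hn : 0 < n) {f g₁ g₂ : Finset (Fin n) → ℝ}
    (hg₁ : Supermodular g₁) (hg₂ : Supermodular g₂) (hsum : f = g₁ + g₂)
    (hirr : ∀ i : Fin n, NondecIrreducibleOn (Finset.univ.erase i) (dDeriv i f))
    (hconn : ∀ j : Fin n, Relation.ReflTransGen (rel f) (⟨0, hn⟩ : Fin n) j) :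
    ∃ c : ℝ, 0 ≤ c ∧ Modular (g₁ - c • f) := by
  classical
  have hder : ∀ i : Fin n, ∃ c : ℝ, 0 ≤ c ∧ ∃ d : ℝ,
      ∀ I : Finset (Fin n), i ∉ I → dDeriv i g₁ I = c * dDeriv i f I + d := by
    intro i
    have hsum' : ∀ I : Finset (Fin n), I ⊆ Finset.univ.erase i →
        dDeriv i f I = dDeriv i g₁ I + dDeriv i g₂ I := by
      intro I _
      simp only [dDeriv, hsum, Pi.add_apply]; ring
    obtain ⟨⟨c, hc, d, hd⟩, -⟩ :=
      (hirr i).2 _ _ (deriv_nondec hg₁ i) (deriv_nondec hg₂ i) hsum'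
    exact ⟨c, hc, d, fun I hI => hd I (Finset.subset_erase.mpr ⟨Finset.subset_univ I, hI⟩)⟩
  choose c hc d hd using hder
  have hedge : ∀ i j : Fin n, rel f i j → c i = c j := by
    rintro i j ⟨hne, K, hiK, hjK, hD⟩
    have hiK' : i ∉ insert j K := by simp [Finset.mem_insert, hne, hiK]
    have hjK' : j ∉ insert i K := by simp [Finset.mem_insert, hne.symm, hjK]
    have e1 : D g₁ i j K = c i * D f i j K := by
      rw [D_eq_deriv, D_eq_deriv, hd i _ hiK', hd i K hiK]; ring
    have e2 : D g₁ j i K = c j * D f j i K := by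
      rw [D_eq_deriv, D_eq_deriv, hd j _ hjK', hd j K hjK]; ring
    have e3 : c i * D f i j K = c j * D f i j K := by
      rw [← e1, D_symm g₁, e2, ← D_symm f]
    exact mul_right_cancel₀ hD e3
  have hcall : ∀ j : Fin n, c j = c ⟨0, hn⟩ := by
    intro j
    have h := hconn j
    induction h with
    | refl => rfl
    | tail _ hbc ih => exact (hedge _ _ hbc).symm.trans ih
  refine ⟨c ⟨0, hn⟩, hc _, modular_of_deriv_const ?_⟩
  intro i
  refine ⟨d i, fun I hI => ?_⟩
  have h := hd i I hI
  rw [hcall i] at h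
  simp only [dDeriv] at h
  simp only [Pi.sub_apply, Pi.smul_apply, smul_eq_mul]
  linarith

lemma nonconst_of_conn (hn : 2 ≤ n) {f : Finset (Fin n) → ℝ}
    (hconn : ∀ j : Fin n, Relation.ReflTransGen (rel f) (⟨0, by omega⟩ : Fin n) j)
    (i : Fin n) : ¬ ConstantOn (Finset.univ.erase i) (dDeriv i f) := by
  rintro ⟨cst, hcst⟩
  have hnoedge : ∀ j : Fin n, ¬ rel f i j := by
    rintro j ⟨hne, K, hiK, hjK, hD⟩
    apply hD
    have h1 : i ∉ insert j K := by simp [Finset.mem_insert, hne, hiK]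
    rw [D_eq_deriv,
      hcst _ (Finset.subset_erase.mpr ⟨Finset.subset_univ _, h1⟩),
      hcst K (Finset.subset_erase.mpr ⟨Finset.subset_univ _, hiK⟩)]
    ring
  by_cases hi : i = (⟨0, by omega⟩ : Fin n)
  · subst hi
    have h1 : ((⟨0, by omega⟩ : Fin n)) ≠ (⟨1, by omega⟩ : Fin n) := by simp [Fin.ext_iff]
    rcases (hconn ⟨1, by omega⟩).cases_head with heq | ⟨b, hb, -⟩
    · exact h1 heq
    · exact hnoedge b hb
  · rcases (hconn i).cases_tail with heq | ⟨b, -, hb⟩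
    · exact hi heq
    · exact hnoedge b (rel_symm hb)

end SSDaux
/-- If `f` is a simple supermodular function on `2^[n]` (`n ≥ 2`) which is neither
modular nor irreducible, then there is a partition `[n] = S₁ ∪ S₂` into nonempty sets
and supermodular functions `g₁` on `2^{S₁}` and `g₂` on `2^{S₂}` with
`f I = g₁ (I ∩ S₁) + g₂ (I ∩ S₂)` for all `I`. -/
theorem simple_supermodular_decomposition {n : ℕ} (hn : 2 ≤ n)
    (f : Finset (Fin n) → ℝ) (hf : SimpleSupermodular f)
    (hnotmod : ¬ Modular f) (hnotirr : ¬ IrreducibleSupermodular f) :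
    ∃ S₁ S₂ : Finset (Fin n), S₁ ∪ S₂ = Finset.univ ∧ Disjoint S₁ S₂ ∧
      S₁.Nonempty ∧ S₂.Nonempty ∧
      ∃ g₁ g₂ : Finset (Fin n) → ℝ,
        (∀ I J : Finset (Fin n), I ⊆ S₁ → J ⊆ S₁ →
          g₁ I + g₁ J ≤ g₁ (I ∩ J) + g₁ (I ∪ J)) ∧
        (∀ I J : Finset (Fin n), I ⊆ S₂ → J ⊆ S₂ →
          g₂ I + g₂ J ≤ g₂ (I ∩ J) + g₂ (I ∪ J)) ∧
        (∀ I : Finset (Fin n), f I = g₁ (I ∩ S₁) + g₂ (I ∩ S₂)) := by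
  classical
  by_cases hconn : ∀ j : Fin n, Relation.ReflTransGen (SSDaux.rel f) (⟨0, by omega⟩ : Fin n) j
  · exfalso
    apply hnotirr
    refine ⟨hf.1, hnotmod, fun g₁ g₂ hg₁ hg₂ hsum => ?_⟩
    have hirr : ∀ i : Fin n, NondecIrreducibleOn (Finset.univ.erase i) (dDeriv i f) := by
      intro i
      rcases hf.2 i with h | h
      · exact h
      · exact absurd h (SSDaux.nonconst_of_conn hn hconn i)
    exact ⟨SSDaux.component_lemma (by omega) hg₁ hg₂ hsum hirr hconn,
           SSDaux.component_lemma (by omega) hg₂ hg₁ (by rw [hsum, add_comm]) hirr hconn⟩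
  · push_neg at hconn
    obtain ⟨j₀, hj₀⟩ := hconn
    set i₀ : Fin n := ⟨0, by omega⟩ with hi₀
    set S₁ : Finset (Fin n) :=
      Finset.univ.filter (fun j => Relation.ReflTransGen (SSDaux.rel f) i₀ j) with hS₁
    have hmem : ∀ j : Fin n, j ∈ S₁ ↔ Relation.ReflTransGen (SSDaux.rel f) i₀ j := by
      intro j; simp [hS₁]
    have hnoedge : ∀ a ∈ S₁, ∀ b ∈ S₁ᶜ, ∀ K : Finset (Fin n), a ∉ K → b ∉ K →
        SSDaux.D f a b K = 0 := by
      intro a ha b hb K haK hbK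
      by_contra hD
      have hab : a ≠ b := by rintro rfl; exact (Finset.mem_compl.mp hb) ha
      exact (Finset.mem_compl.mp hb)
        ((hmem b).mpr (((hmem a).mp ha).tail ⟨hab, K, haK, hbK, hD⟩))
    have hL1 : ∀ a ∈ S₁, ∀ I : Finset (Fin n), I ⊆ S₁ → a ∉ I →
        ∀ J : Finset (Fin n), J ⊆ S₁ᶜ →
        f (insert a (I ∪ J)) - f (I ∪ J) = f (insert a I) - f I := by
      intro a ha I hI haI J
      induction J using Finset.induction_on with
      | empty => intro _; simp
      | @insert b J hbJ ih =>
        intro hbJS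
        have hbS : b ∈ S₁ᶜ := hbJS (Finset.mem_insert_self b J)
        have hJS : J ⊆ S₁ᶜ := fun x hx => hbJS (Finset.mem_insert_of_mem hx)
        have haIJ : a ∉ I ∪ J := by
          simp only [Finset.mem_union]
          rintro (h | h)
          · exact haI h
          · exact Finset.mem_compl.mp (hJS h) ha
        have hbIJ : b ∉ I ∪ J := by
          simp only [Finset.mem_union]
          rintro (h | h)
          · exact Finset.mem_compl.mp hbS (hI h)
          · exact hbJ h
        have hD := hnoedge a ha b hbS (I ∪ J) haIJ hbIJ
        rw [Finset.union_insert]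
        have hih := ih hJS
        unfold SSDaux.D at hD
        linarith
    have hL2 : ∀ I : Finset (Fin n), I ⊆ S₁ → ∀ J : Finset (Fin n), J ⊆ S₁ᶜ →
        f (I ∪ J) + f ∅ = f I + f J := by
      intro I
      induction I using Finset.induction_on with
      | empty => intro _ J _; rw [Finset.empty_union]; ring
      | @insert a I haI ih =>
        intro hIS J hJ
        have haS : a ∈ S₁ := hIS (Finset.mem_insert_self a I)
        have hIS' : I ⊆ S₁ := fun x hx => hIS (Finset.mem_insert_of_mem hx)
        rw [Finset.insert_union]
        have h1 := hL1 a haS I hIS' haI J hJ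
        have h2 := ih hIS' J hJ
        linarith
    refine ⟨S₁, S₁ᶜ, Finset.union_compl S₁, disjoint_compl_right,
      ⟨i₀, (hmem i₀).mpr Relation.ReflTransGen.refl⟩,
      ⟨j₀, Finset.mem_compl.mpr (fun h => hj₀ ((hmem j₀).mp h))⟩,
      f, (fun I => f I - f ∅), fun I J _ _ => hf.1 I J, ?_, ?_⟩
    · intro I J _ _
      have := hf.1 I J
      simp only
      linarith
    · intro I
      have hsplit : (I ∩ S₁) ∪ (I ∩ S₁ᶜ) = I := by
        rw [← Finset.inter_union_distrib_left, Finset.union_compl, Finset.inter_univ]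
      have h := hL2 (I ∩ S₁) Finset.inter_subset_right (I ∩ S₁ᶜ) Finset.inter_subset_right
      rw [hsplit] at h
      simp only
      linarith
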